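/- Equality case: If G is a simple graph on n vertices with φ(G) = n/(n − \bar{\bar d}(G)), then n ≡ 0 (mod φ(G)) and G is regular of degree n(φ(G)−1)/φ(G). -/

import Mathlib

open Finset

/-- A δ-set in a graph: every vertex in the set has degree at most `n - |S|`. -/
def IsDeltaSet {V : Type*} [Fintype V] (G : SimpleGraph V) [DecidableRel G.Adj]
    (S : Finset V) : Prop :=
  ∀ v ∈ S, G.degree v ≤ Fintype.card V - S.card

/-- The generalized chromatic number: the least `r` such that the vertex set
partitions into `r` δ-sets. -/
noncomputable def genChrom {V : Type*} [Fintype V] [DecidableEq V]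
    (G : SimpleGraph V) [DecidableRel G.Adj] : ℕ :=
  sInf {r | ∃ f : V → Fin r, ∀ i, IsDeltaSet G (Finset.univ.filter fun v => f v = i)}

/-- Quadratic mean of the degree sequence. -/
noncomputable def qmDeg {V : Type*} [Fintype V] (G : SimpleGraph V) [DecidableRel G.Adj] : ℝ :=
  Real.sqrt ((∑ v, (G.degree v : ℝ) ^ 2) / Fintype.card V)

/-- `k`-th elementary symmetric polynomial of `x : Fin r → ℝ`. -/
def esym {r : ℕ} (k : ℕ) (x : Fin r → ℝ) : ℝ :=
  ∑ t ∈ Finset.univ.powersetCard k, ∏ i ∈ t, x i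

set_option linter.unnecessarySeqFocus false in
lemma key_ineq (r : ℕ) (hr : 1 ≤ r) (n : ℝ) (hn : 0 < n) (a : Fin r → ℝ)
    (ha0 : ∀ i, 0 ≤ a i) (hsum : ∑ i, a i = n) :
    (∑ i, a i * (n - a i)^2 ≤ n * (n - n/r)^2) ∧
    ((∑ i, a i * (n - a i)^2 = n * (n - n/r)^2) → ∀ i, a i = n / r) := by
  rcases eq_or_lt_of_le hr with h1 | hr2
  · -- r = 1
    have hr1 : r = 1 := h1.symm
    subst hr1
    have ha : a 0 = n := by simpa using hsum
    have : ∀ i : Fin 1, a i = n := fun i => by fin_cases i <;> exact ha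
    constructor
    · simp [Fin.sum_univ_one, ha]
    · intro _ i
      fin_cases i; simp [ha]
  · -- r ≥ 2
    have hr0 : (r : ℝ) ≠ 0 := by positivity
    set m : ℝ := n / r with hm
    have hrm : (r : ℝ) * m = n := by rw [hm]; field_simp
    have hm_half : 2 * m ≤ n := by
      have h2r : (2 : ℝ) ≤ r := by exact_mod_cast hr2
      have h : n / (r:ℝ) ≤ n / 2 :=
        div_le_div_of_nonneg_left hn.le (by norm_num) h2r
      rw [hm]; linarith
    have hmn : m < n := by nlinarith
    have hm0 : 0 < m := by positivity
    -- slack terms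
    set s : Fin r → ℝ := fun i => (a i - m)^2 * (2*n - 2*m - a i) with hs
    have hident : ∑ i, a i * (n - a i)^2 = n * (n - m)^2 - ∑ i, s i := by
      have h1 : ∀ i, a i * (n - a i)^2 + s i
          = (n^2 - 4*m*n + 3*m^2) * a i + (2*n*m^2 - 2*m^3) := by
        intro i; simp only [hs]; ring
      have h2 : ∑ i, (a i * (n - a i)^2 + s i)
          = (n^2 - 4*m*n + 3*m^2) * n + r * (2*n*m^2 - 2*m^3) := by
        rw [Finset.sum_congr rfl (fun i _ => h1 i)]
        rw [Finset.sum_add_distrib, ← Finset.mul_sum, hsum, Finset.sum_const]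
        simp [Finset.card_univ, nsmul_eq_mul]
      rw [Finset.sum_add_distrib] at h2
      nlinarith [h2, hrm]
    have hle : ∀ i, a i ≤ n := by
      intro i
      calc a i ≤ ∑ j, a j := Finset.single_le_sum (fun j _ => ha0 j) (mem_univ i)
        _ = n := hsum
    have hs_nonneg : ∀ i, 0 ≤ s i := by
      intro i
      apply mul_nonneg (sq_nonneg _)
      nlinarith [hle i]
    constructor
    · have : 0 ≤ ∑ i, s i := Finset.sum_nonneg (fun i _ => hs_nonneg i)
      rw [hident]; linarith
    · intro heq i
      have hzero : ∑ i, s i = 0 := by rw [hident] at heq; linarith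
      have hall : ∀ j ∈ Finset.univ, s j = 0 :=
        (Finset.sum_eq_zero_iff_of_nonneg (fun j _ => hs_nonneg j)).mp hzero
      have hcases : ∀ j, a j = m ∨ a j = 2*n - 2*m := by
        intro j
        have := hall j (mem_univ j)
        simp only [hs] at this
        rcases mul_eq_zero.mp this with h | h
        · left; have := sq_eq_zero_iff.mp h; linarith
        · right; linarith
      rcases hcases i with h | h
      · exact h
      · -- a i = 2n - 2m : derive contradiction using another index
        exfalso
        rcases eq_or_ne (2*n - 2*m) m with hem | hem
        · -- then 2n = 3m, but 2m ≤ n gives 4m ≤ 2n = 3m, m ≤ 0, contra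
          nlinarith
        · haveI : Nontrivial (Fin r) := Fin.nontrivial_iff_two_le.mpr hr2
          obtain ⟨j, hj⟩ := exists_ne i
          have hpair : a i + a j ≤ n := by
            have hsub : ({i, j} : Finset (Fin r)) ⊆ Finset.univ := Finset.subset_univ _
            have := Finset.sum_le_sum_of_subset_of_nonneg hsub
              (fun k _ _ => ha0 k)
            rw [Finset.sum_pair (Ne.symm hj), hsum] at this
            exact this
          rcases hcases j with h2 | h2 <;> nlinarith

theorem stmt8 {V : Type*} [Fintype V] [DecidableEq V] (G : SimpleGraph V) [DecidableRel G.Adj]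
    (hn : 0 < Fintype.card V)
    (heq : (genChrom G : ℝ) = (Fintype.card V : ℝ) / ((Fintype.card V : ℝ) - qmDeg G)) :
    genChrom G ∣ Fintype.card V ∧
      G.IsRegularOfDegree (Fintype.card V * (genChrom G - 1) / genChrom G) := by
  classical
  haveI hne : Nonempty V := Fintype.card_pos_iff.mp hn
  set n := Fintype.card V with hnn
  -- the defining set is nonempty
  have hSne : {r | ∃ f : V → Fin r, ∀ i,
      IsDeltaSet G (Finset.univ.filter fun v => f v = i)}.Nonempty := by
    refine ⟨n, (Fintype.equivFin V : V → Fin n), fun i v hv => ?_⟩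
    have hcard : (Finset.univ.filter fun v => (Fintype.equivFin V) v = i).card ≤ 1 := by
      apply Finset.card_le_one.mpr
      intro a ha b hb
      simp only [Finset.mem_filter] at ha hb
      exact (Fintype.equivFin V).injective (ha.2.trans hb.2.symm)
    have hdeg : G.degree v < n := G.degree_lt_card_verts v
    omega
  set r := genChrom G with hrdef
  have hrmem : ∃ f : V → Fin r, ∀ i,
      IsDeltaSet G (Finset.univ.filter fun v => f v = i) := by
    rw [hrdef, genChrom]
    exact Nat.sInf_mem hSne
  obtain ⟨f, hf⟩ := hrmem
  have hr1 : 1 ≤ r := by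
    rcases Nat.eq_zero_or_pos r with h0 | h
    · exfalso
      have := f (Classical.arbitrary V)
      rw [h0] at this
      exact this.elim0
    · exact h
  have hr0 : (r : ℝ) ≠ 0 := by positivity
  have hn0 : (0:ℝ) < n := by exact_mod_cast hn
  -- q̄ = n - n/r
  have hq : qmDeg G = (n : ℝ) - n / r := by
    have hden : (n : ℝ) - qmDeg G ≠ 0 := by
      intro h
      rw [h, div_zero] at heq
      have : (1:ℝ) ≤ r := by exact_mod_cast hr1
      linarith
    field_simp at heq
    field_simp
    linarith [heq]
  -- sum of squared degrees
  have hq2 : ∑ v, (G.degree v : ℝ)^2 = n * ((n:ℝ) - n/r)^2 := by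
    have h1 : qmDeg G ^ 2 = (∑ v, (G.degree v : ℝ) ^ 2) / n := by
      rw [qmDeg]
      exact Real.sq_sqrt (by positivity)
    have h2 : (∑ v, (G.degree v : ℝ) ^ 2) = n * qmDeg G ^ 2 := by
      rw [h1]; field_simp
    rw [hq] at h2
    exact h2
  -- fiber sizes
  set N : Fin r → ℕ := fun i => (Finset.univ.filter fun v => f v = i).card with hN
  have hNsum : ∑ i, N i = n := by
    rw [hnn, ← Finset.card_univ]
    exact (Finset.card_eq_sum_card_fiberwise (fun v _ => Finset.mem_univ (f v))).symm
  have hNle : ∀ i, N i ≤ n := fun i => by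
    rw [hnn, ← Finset.card_univ]; exact Finset.card_le_card (Finset.filter_subset _ _)
  have hdegle : ∀ v, (G.degree v : ℝ) ≤ (n:ℝ) - N (f v) := by
    intro v
    have hv : v ∈ Finset.univ.filter fun w => f w = f v := by simp
    have := hf (f v) v hv
    have hle := hNle (f v)
    have : (G.degree v : ℝ) ≤ ((n - N (f v) : ℕ) : ℝ) := by exact_mod_cast this
    rwa [Nat.cast_sub hle] at this
  -- first inequality: sum over fibers
  have hfib : ∑ v, (G.degree v : ℝ)^2
      = ∑ i, ∑ v ∈ Finset.univ.filter fun v => f v = i, (G.degree v : ℝ)^2 :=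
    (Finset.sum_fiberwise _ _ _).symm
  have hstep1 : ∀ i, ∑ v ∈ Finset.univ.filter fun v => f v = i, (G.degree v : ℝ)^2
      ≤ (N i : ℝ) * ((n:ℝ) - N i)^2 := by
    intro i
    have : ∀ v ∈ Finset.univ.filter fun w => f w = i,
        (G.degree v : ℝ)^2 ≤ ((n:ℝ) - N i)^2 := by
      intro v hv
      have hfv : f v = i := by simpa using hv
      have h1 := hdegle v
      rw [hfv] at h1
      have h0 : (0:ℝ) ≤ (G.degree v : ℝ) := by positivity
      nlinarith
    calc ∑ v ∈ Finset.univ.filter fun w => f w = i, (G.degree v : ℝ)^2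
        ≤ ∑ v ∈ Finset.univ.filter fun w => f w = i, ((n:ℝ) - N i)^2 :=
          Finset.sum_le_sum this
      _ = (N i : ℝ) * ((n:ℝ) - N i)^2 := by
          rw [Finset.sum_const, nsmul_eq_mul]
  have hA : ∑ v, (G.degree v : ℝ)^2 ≤ ∑ i, (N i : ℝ) * ((n:ℝ) - N i)^2 := by
    rw [hfib]; exact Finset.sum_le_sum (fun i _ => hstep1 i)
  -- apply key lemma
  have hkey := key_ineq r hr1 n hn0 (fun i => (N i : ℝ))
    (fun i => Nat.cast_nonneg _)
    (by rw [← hNsum]; push_cast; ring)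
  have hB := hkey.1
  -- sandwich
  have hAB : ∑ i, (N i : ℝ) * ((n:ℝ) - N i)^2 = (n:ℝ) * ((n:ℝ) - n/r)^2 := by
    linarith [hq2, hA, hB]
  have hNall : ∀ i, (N i : ℝ) = (n:ℝ) / r := hkey.2 hAB
  have hdegeq : ∀ v, (G.degree v : ℝ) = (n:ℝ) - N (f v) := by
    intro v
    -- equality in the fiberwise bound forces per-vertex equality
    have hAeq : ∑ v, (G.degree v : ℝ)^2 = ∑ i, (N i : ℝ) * ((n:ℝ) - N i)^2 := by
      linarith [hq2, hAB]
    -- sum of nonneg slacks is zero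
    have hslack : ∑ w, (((n:ℝ) - N (f w))^2 - (G.degree w : ℝ)^2) = 0 := by
      have hsplit : ∑ w, ((n:ℝ) - N (f w))^2
          = ∑ i, (N i : ℝ) * ((n:ℝ) - N i)^2 := by
        rw [← Finset.sum_fiberwise Finset.univ f (fun w => ((n:ℝ) - N (f w))^2)]
        apply Finset.sum_congr rfl
        intro i _
        have : ∀ w ∈ Finset.univ.filter fun w => f w = i,
            ((n:ℝ) - N (f w))^2 = ((n:ℝ) - N i)^2 := by
          intro w hw
          have : f w = i := by simpa using hw
          rw [this]
        rw [Finset.sum_congr rfl this, Finset.sum_const, nsmul_eq_mul]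
      rw [Finset.sum_sub_distrib, hsplit, hAeq]
      ring
    have hterm : ∀ w ∈ (Finset.univ : Finset V),
        (0:ℝ) ≤ ((n:ℝ) - N (f w))^2 - (G.degree w : ℝ)^2 := by
      intro w _
      have h1 := hdegle w
      have h0 : (0:ℝ) ≤ (G.degree w : ℝ) := by positivity
      nlinarith
    have hzero := (Finset.sum_eq_zero_iff_of_nonneg hterm).mp hslack v (Finset.mem_univ v)
    have h1 := hdegle v
    have h0 : (0:ℝ) ≤ (G.degree v : ℝ) := by positivity
    nlinarith
  -- conclusions
  obtain ⟨i0⟩ : Nonempty (Fin r) := ⟨⟨0, hr1⟩⟩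
  have hk : (r : ℝ) * (N i0 : ℝ) = n := by
    rw [hNall i0]; field_simp
  have hkn : r * N i0 = n := by exact_mod_cast hk
  set k := N i0 with hkdef
  refine ⟨⟨k, hkn.symm⟩, ?_⟩
  intro v
  have hNv : (N (f v) : ℝ) = (k : ℝ) := by
    rw [hNall (f v), hNall i0]
  have hNvk : N (f v) = k := by exact_mod_cast hNv
  have hdeg : (G.degree v : ℝ) = (n : ℝ) - k := by
    rw [hdegeq v, hNvk]
  have hdiv : n * (r - 1) / r = k * (r - 1) := by
    rw [← hkn, mul_assoc]
    exact Nat.mul_div_cancel_left _ hr1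
  rw [hdiv]
  have : (G.degree v : ℝ) = ((k * (r-1) : ℕ) : ℝ) := by
    rw [hdeg]
    have hr1' : (1:ℝ) ≤ (r:ℝ) := by exact_mod_cast hr1
    push_cast [Nat.cast_sub hr1]
    have : (n:ℝ) = r * k := by exact_mod_cast hkn.symm
    rw [this]; ring
  exact_mod_cast this
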